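/- If ρ is monotone decreasing and the family U is c-quasi-convex (U_{λX+(1-λ)Y} ⊆ (U_X ∪ U_Y) + E_+ for all X, Y, λ ∈ [0,1]), then the robust risk measure ρ̃(X) = sup_{Z ∈ U_X} ρ(Z) is quasi-convex: ρ̃(λX+(1-λ)Y) ≤ max{ρ̃(X), ρ̃(Y)}. -/

import Mathlib

open Set Pointwise

theorem stmt5 {E : Type*} [AddCommGroup E] [PartialOrder E] [IsOrderedAddMonoid E] [Module ℝ E] (ρ : E → EReal)
    (hρ : ∀ X Y : E, X ≤ Y → ρ Y ≤ ρ X)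
    (U : E → Set E)
    (hU : ∀ (X Y : E) (l : ℝ), 0 ≤ l → l ≤ 1 →
      U (l • X + (1 - l) • Y) ⊆ (U X ∪ U Y) + {K : E | 0 ≤ K}) :
    ∀ (X Y : E) (l : ℝ), 0 ≤ l → l ≤ 1 →
      (⨆ Z ∈ U (l • X + (1 - l) • Y), ρ Z) ≤
        max (⨆ Z ∈ U X, ρ Z) (⨆ Z ∈ U Y, ρ Z) := by
  intro X Y l hl0 hl1
  refine iSup₂_le fun Z hZ => ?_
  obtain ⟨W, hW, K, hK, hZK⟩ := hU X Y l hl0 hl1 hZ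
  have hρZ : ρ Z ≤ ρ W := by
    apply hρ
    rw [← hZK]
    simpa using add_le_add_left hK W
  cases hW with
  | inl h => exact le_trans hρZ (le_max_of_le_left (le_iSup₂ (f := fun Z _ => ρ Z) W h))
  | inr h => exact le_trans hρZ (le_max_of_le_right (le_iSup₂ (f := fun Z _ => ρ Z) W h))
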